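/- Uniform Adjudication (UA): if (Cov) holds universally in a Kripke model, then (NecInc) holds universally. Fix a type W of worlds, a relation R : W → W → Prop, and a domain type D. Suppose that for all world-indexed pluralities pp, qq : W → Set D and every world w: pp w = qq w implies pp v = qq v for every v with R w v. Then for every plurality pp, every world w, and every a : D: if a ∈ pp w then a ∈ pp v for every v with R w v. (The proof applies the (Cov) hypothesis to pp and the adjunction pp + a, using that a ∈ pp w gives pp w = pp w ∪ {a}.) -/
import Mathlib

/-- Uniform Adjudication (UA): if (Cov) holds universally in a Kripke model,
then (NecInc) holds universally. -/
theorem cov_implies_necInc (W D : Type) (R : W → W → Prop)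
    (cov : ∀ (pp qq : W → Set D) (w : W),
      pp w = qq w → ∀ v, R w v → pp v = qq v) :
    ∀ (pp : W → Set D) (w : W) (a : D),
      a ∈ pp w → ∀ v, R w v → a ∈ pp v := by
  intro pp w a ha v hv
  have h := cov pp (fun u => pp u ∪ {a}) w
    (by simp [Set.union_eq_self_of_subset_right, Set.singleton_subset_iff.mpr ha]) v hv
  rw [h]
  exact Or.inr rfl
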